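/- With α = 2/3, φ₀(x) = sin(2x/3) + (1/√3) cos(2x/3) and φ₁(x) = (1/4) sin(x/3) − (1/(4√3)) cos(x/3) + (1/20) sin(5x/3) + (1/(20√3)) cos(5x/3), the identity (α+1)² φ₁(x) + φ₁''(x) = −(α cos(x) φ₀(x) − sin(x) φ₀'(x)) holds for all real x, and φ₁'(−π) = φ₁'(π/2) = 0. -/

import Mathlib

open Real

noncomputable def vphi010 : ℝ → ℝ := fun x => Real.sin (2*x/3) + (1/Real.sqrt 3) * Real.cos (2*x/3)
noncomputable def vphi011 : ℝ → ℝ := fun x =>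
  (1/4) * Real.sin (x/3) - (1/(4*Real.sqrt 3)) * Real.cos (x/3)
    + (1/20) * Real.sin (5*x/3) + (1/(20*Real.sqrt 3)) * Real.cos (5*x/3)

noncomputable def vphi010' : ℝ → ℝ := fun x =>
  (2/3) * Real.cos (2*x/3) - (2/(3*Real.sqrt 3)) * Real.sin (2*x/3)

noncomputable def vphi011' : ℝ → ℝ := fun x =>
  (1/12) * Real.cos (x/3) + (1/(12*Real.sqrt 3)) * Real.sin (x/3)
    + (1/12) * Real.cos (5*x/3) - (1/(12*Real.sqrt 3)) * Real.sin (5*x/3)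

noncomputable def vphi011'' : ℝ → ℝ := fun x =>
  -(1/36) * Real.sin (x/3) + (1/(36*Real.sqrt 3)) * Real.cos (x/3)
    - (5/36) * Real.sin (5*x/3) - (5/(36*Real.sqrt 3)) * Real.cos (5*x/3)

lemma hd13 (x : ℝ) : HasDerivAt (fun x : ℝ => x/3) (1/3) x := by
  simpa using (hasDerivAt_id x).div_const 3

lemma hd23 (x : ℝ) : HasDerivAt (fun x : ℝ => 2*x/3) (2/3) x := by
  simpa using ((hasDerivAt_id x).const_mul 2).div_const 3

lemma hd53 (x : ℝ) : HasDerivAt (fun x : ℝ => 5*x/3) (5/3) x := by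
  simpa using ((hasDerivAt_id x).const_mul 5).div_const 3

lemma hdv010 (x : ℝ) : HasDerivAt vphi010 (vphi010' x) x := by
  have h1 := (hd23 x).sin
  have h2 := ((hd23 x).cos).const_mul (1/Real.sqrt 3)
  have := h1.add h2
  refine this.congr_deriv ?_
  simp [vphi010', mul_comm]
  ring

lemma hdv011 (x : ℝ) : HasDerivAt vphi011 (vphi011' x) x := by
  have h1 := ((hd13 x).sin).const_mul (1/4 : ℝ)
  have h2 := ((hd13 x).cos).const_mul (1/(4*Real.sqrt 3) : ℝ)
  have h3 := ((hd53 x).sin).const_mul (1/20 : ℝ)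
  have h4 := ((hd53 x).cos).const_mul (1/(20*Real.sqrt 3) : ℝ)
  have := ((h1.sub h2).add h3).add h4
  refine this.congr_deriv ?_
  simp [vphi011']
  ring

lemma hdv011' (x : ℝ) : HasDerivAt vphi011' (vphi011'' x) x := by
  have h1 := ((hd13 x).cos).const_mul (1/12 : ℝ)
  have h2 := ((hd13 x).sin).const_mul (1/(12*Real.sqrt 3) : ℝ)
  have h3 := ((hd53 x).cos).const_mul (1/12 : ℝ)
  have h4 := ((hd53 x).sin).const_mul (1/(12*Real.sqrt 3) : ℝ)
  have := ((h1.add h2).add h3).sub h4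
  refine this.congr_deriv ?_
  simp [vphi011'']
  ring

lemma deriv_v010 : deriv vphi010 = vphi010' :=
  funext fun x => (hdv010 x).deriv

lemma deriv_v011 : deriv vphi011 = vphi011' :=
  funext fun x => (hdv011 x).deriv

lemma deriv2_v011 : deriv (deriv vphi011) = vphi011'' := by
  rw [deriv_v011]; exact funext fun x => (hdv011' x).deriv

lemma sqrt3_ne : Real.sqrt 3 ≠ 0 := by positivity

lemma sqrt3_sq : Real.sqrt 3 * Real.sqrt 3 = 3 :=
  Real.mul_self_sqrt (by norm_num)

theorem vnotch_first_shadow_j1 :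
    (∀ x : ℝ, ((2/3 : ℝ) + 1)^2 * vphi011 x + deriv (deriv vphi011) x =
      -((2/3 : ℝ) * Real.cos x * vphi010 x - Real.sin x * deriv vphi010 x)) ∧
    deriv vphi011 (-π) = 0 ∧ deriv vphi011 (π/2) = 0 := by
  refine ⟨?_, ?_, ?_⟩
  · intro x
    rw [deriv2_v011, deriv_v010]
    simp only [vphi010, vphi010', vphi011, vphi011'']
    have hs := Real.sin_sub (2*x/3) x
    have hc := Real.cos_sub (2*x/3) x
    rw [show (2*x/3 - x : ℝ) = -(x/3) by ring, Real.sin_neg] at hs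
    rw [show (2*x/3 - x : ℝ) = -(x/3) by ring, Real.cos_neg] at hc
    have hR : -((2/3 : ℝ) * Real.cos x * (Real.sin (2*x/3) + (1/Real.sqrt 3) * Real.cos (2*x/3))
        - Real.sin x * ((2/3) * Real.cos (2*x/3) - (2/(3*Real.sqrt 3)) * Real.sin (2*x/3)))
        = (2/3) * Real.sin (x/3) - (2/(3*Real.sqrt 3)) * Real.cos (x/3) := by
      linear_combination (2/3 : ℝ) * hs + (2/(3*Real.sqrt 3)) * hc
    rw [hR]
    ring
  · rw [deriv_v011]
    simp only [vphi011']
    have e1 : (-π/3 : ℝ) = -(π/3) := by ring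
    have e5 : (5*(-π)/3 : ℝ) = -(2*π - π/3) := by ring
    rw [e1, e5, Real.cos_neg, Real.sin_neg, Real.cos_neg, Real.sin_neg,
      Real.cos_sub, Real.sin_sub, Real.cos_two_pi, Real.sin_two_pi,
      Real.cos_pi_div_three, Real.sin_pi_div_three]
    field_simp
    ring
  · rw [deriv_v011]
    simp only [vphi011']
    have e1 : ((π/2)/3 : ℝ) = π/6 := by ring
    have e5 : (5*(π/2)/3 : ℝ) = π - π/6 := by ring
    rw [e1, e5, Real.cos_pi_sub, Real.sin_pi_sub, Real.cos_pi_div_six,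
      Real.sin_pi_div_six]
    ring
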